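/- For every integer m ≥ 4 and every n ≥ 1, the inequality H_{n,(2^m)}(x) ≥ H_{n,(3,1^{2m−3})}(x) holds for all x ∈ [0,∞)^n. Explicitly: (h_{n,2}(x))^m / C(n+1,2)^m ≥ h_{n,3}(x) · (h_{n,1}(x))^{2m−3} / (C(n+2,3) · n^{2m−3}) for all x ∈ [0,∞)^n. -/

import Mathlib

/-- The complete homogeneous symmetric polynomial `h_{n,k}`, as a function on `ℝ^n`:
the sum of all monomials of total degree `k` in `x 0, …, x (n-1)` (with `h_{n,0} = 1`). -/
noncomputable def hsym (n k : ℕ) (x : Fin n → ℝ) : ℝ :=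
  ∑ d ∈ Finset.Nat.antidiagonalTuple n k, ∏ i, x i ^ d i


open Finset

lemma hsym_nonneg (n k : ℕ) (x : Fin n → ℝ) (hx : ∀ i, 0 ≤ x i) : 0 ≤ hsym n k x :=
  Finset.sum_nonneg fun d _ => Finset.prod_nonneg fun i _ => pow_nonneg (hx i) _
lemma hsym_zero (n : ℕ) (x : Fin n → ℝ) : hsym n 0 x = 1 := by
  simp [hsym, Finset.Nat.antidiagonalTuple_zero_right]

lemma hsym_succ (n k : ℕ) (x : Fin (n+1) → ℝ) :
    hsym (n+1) k x
      = ∑ j ∈ range (k+1), x 0 ^ j * hsym n (k - j) (fun i => x i.succ) := by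
  rw [← Finset.Nat.sum_antidiagonal_eq_sum_range_succ_mk
    (fun ij => x 0 ^ ij.1 * hsym n ij.2 (fun i => x i.succ))]
  unfold hsym
  simp_rw [Finset.mul_sum, ← Finset.sum_sigma (Finset.HasAntidiagonal.antidiagonal k)
    (fun ij => Finset.Nat.antidiagonalTuple n ij.2)
    (fun p => x 0 ^ p.1.1 * ∏ i, x i.succ ^ p.2 i)]
  refine Finset.sum_nbij'
    (fun (d : Fin (n+1) → ℕ) =>
      (⟨(d 0, ∑ i : Fin n, d i.succ), fun (i : Fin n) => d i.succ⟩ : Σ _ij : ℕ × ℕ, (Fin n → ℕ)))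
    (fun p => Fin.cons p.1.1 p.2) ?_ ?_ ?_ ?_ ?_
  · intro d hd
    rw [Finset.Nat.mem_antidiagonalTuple, Fin.sum_univ_succ] at hd
    simp [Finset.mem_sigma, Finset.mem_antidiagonal, Finset.Nat.mem_antidiagonalTuple, hd]
  · intro p hp
    rw [Finset.mem_sigma, Finset.HasAntidiagonal.mem_antidiagonal, Finset.Nat.mem_antidiagonalTuple] at hp
    rw [Finset.Nat.mem_antidiagonalTuple, Fin.sum_univ_succ]
    simp [hp.1, hp.2]
  · intro d hd
    exact Fin.cons_self_tail d
  · intro p hp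
    rw [Finset.mem_sigma, Finset.HasAntidiagonal.mem_antidiagonal, Finset.Nat.mem_antidiagonalTuple] at hp
    refine Sigma.ext ?_ ?_
    · simp [hp.2]
    · simp
  · intro d hd
    rw [Fin.prod_univ_succ]

lemma hsym_one (n : ℕ) : ∀ x : Fin n → ℝ, hsym n 1 x = ∑ i, x i := by
  induction n with
  | zero => intro x; simp [hsym]
  | succ n ih =>
    intro x
    rw [hsym_succ]
    norm_num [Finset.sum_range_succ, hsym_zero, ih, Fin.sum_univ_succ]
    ring

lemma hsym_two (n : ℕ) : ∀ x : Fin n → ℝ,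
    2 * hsym n 2 x = (∑ i, x i)^2 + ∑ i, (x i)^2 := by
  induction n with
  | zero => intro x; simp [hsym]
  | succ n ih =>
    intro x
    rw [hsym_succ]
    norm_num [Finset.sum_range_succ, hsym_zero, hsym_one, Fin.sum_univ_succ]
    have h2 := ih (fun i => x i.succ)
    linear_combination h2

lemma hsym_three (n : ℕ) : ∀ x : Fin n → ℝ,
    6 * hsym n 3 x = (∑ i, x i)^3 + 3*(∑ i, x i)*(∑ i, (x i)^2) + 2*(∑ i, (x i)^3) := by
  induction n with
  | zero => intro x; simp [hsym]
  | succ n ih =>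
    intro x
    rw [hsym_succ]
    norm_num [Finset.sum_range_succ, hsym_zero, hsym_one, Fin.sum_univ_succ]
    have h3 := ih (fun i => x i.succ)
    have h2 := hsym_two n (fun i => x i.succ)
    linear_combination h3 + 3 * x 0 * h2
lemma choose_two_cast (m : ℕ) : (((m+1).choose 2 : ℕ) : ℝ) * 2 = (m+1) * m := by
  induction m with
  | zero => norm_num
  | succ m ih =>
    rw [show m+1+1 = (m+1)+1 from rfl, Nat.choose_succ_succ (m+1) 1, Nat.choose_one_right]
    push_cast
    push_cast at ih
    linear_combination ih

lemma choose_three_cast (m : ℕ) : (((m+2).choose 3 : ℕ) : ℝ) * 6 = m * (m+1) * (m+2) := by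
  induction m with
  | zero => norm_num
  | succ m ih =>
    rw [show m+1+2 = (m+2)+1 from rfl, Nat.choose_succ_succ (m+2) 2]
    have h2 := choose_two_cast (m+1)
    push_cast
    push_cast at ih h2
    linear_combination ih + 3 * h2

lemma key_ineq (N c s : ℝ) (hN : 1 ≤ N) (hc : 0 ≤ c) (hs : 0 ≤ s) :
    (N*(N+1))^3*c^5*(N*(N+1)*(N+2)*c^3 + 3*(N+2)*c*s^2 + 2*s^3)
      ≤ (N+2)*(N*(N+1)*c^2+s^2)^4 := by
  have h1 : (0:ℝ) ≤ (N*(N+1))^3*c^4*s^2*((N+2)*c - s)^2 := by positivity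
  have h2 : (0:ℝ) ≤ (6*(N+2)^2 - N*(N+1)) * (N*(N+1))^2 * c^4 * s^4 := by
    have : (0:ℝ) ≤ 6*(N+2)^2 - N*(N+1) := by nlinarith
    positivity
  have h3 : (0:ℝ) ≤ 4*(N+2)^2*(N*(N+1))*c^2*s^6 := by positivity
  have h4 : (0:ℝ) ≤ (N+2)^2*s^8 := by positivity
  have hpos : (0:ℝ) < N + 2 := by linarith
  have h5 : 0 ≤ (N+2) * ((N+2)*(N*(N+1)*c^2+s^2)^4
      - (N*(N+1))^3*c^5*(N*(N+1)*(N+2)*c^3 + 3*(N+2)*c*s^2 + 2*s^3)) := by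
    have : (N+2) * ((N+2)*(N*(N+1)*c^2+s^2)^4
        - (N*(N+1))^3*c^5*(N*(N+1)*(N+2)*c^3 + 3*(N+2)*c*s^2 + 2*s^3))
        = (N*(N+1))^3*c^4*s^2*((N+2)*c - s)^2
          + (6*(N+2)^2 - N*(N+1)) * (N*(N+1))^2 * c^4 * s^4
          + 4*(N+2)^2*(N*(N+1))*c^2*s^6 + (N+2)^2*s^8 := by ring
    rw [this]; linarith
  nlinarith [(mul_nonneg_iff_of_pos_left hpos).mp h5]

lemma step_ineq (n : ℕ) (hn : 1 ≤ n) (x : Fin n → ℝ) (hx : ∀ i, 0 ≤ x i) :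
    (((n+1).choose 2 : ℕ):ℝ) * (hsym n 1 x)^2 ≤ (n:ℝ)^2 * hsym n 2 x := by
  have hN : (1:ℝ) ≤ (n:ℝ) := by exact_mod_cast hn
  have cs : (∑ i, x i)^2 ≤ (n:ℝ) * ∑ i, (x i)^2 := by
    have h := sq_sum_le_card_mul_sum_sq (s := (Finset.univ : Finset (Fin n))) (f := x)
    simpa using h
  have e1 := hsym_one n x
  have e2 := hsym_two n x
  have eC2 := choose_two_cast n
  push_cast at eC2
  rw [e1]
  nlinarith [cs, hN, sq_nonneg (∑ i, x i), Finset.sum_nonneg (fun i (_ : i ∈ Finset.univ) => sq_nonneg (x i)), e2, eC2]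

lemma base4 (n : ℕ) (hn : 1 ≤ n) (x : Fin n → ℝ) (hx : ∀ i, 0 ≤ x i) :
    (((n+1).choose 2 : ℕ):ℝ)^4 * (hsym n 3 x * (hsym n 1 x)^5)
      ≤ (((n+2).choose 3 : ℕ):ℝ) * (n:ℝ)^5 * (hsym n 2 x)^4 := by
  set N : ℝ := (n:ℝ) with hNdef
  have hN : 1 ≤ N := by rw [hNdef]; exact_mod_cast hn
  have hN0 : (0:ℝ) ≤ N := by linarith
  have hNne : N ≠ 0 := by linarith
  set S1 := ∑ i, x i with hS1def
  set S2 := ∑ i, (x i)^2 with hS2def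
  set S3 := ∑ i, (x i)^3 with hS3def
  set c := S1 / N with hcdef
  have hc : 0 ≤ c := div_nonneg (Finset.sum_nonneg fun i _ => hx i) hN0
  have hS1 : S1 = N * c := by rw [hcdef]; field_simp
  set q := ∑ i, (x i - c)^2 with hqdef
  have hq0 : 0 ≤ q := Finset.sum_nonneg fun i _ => sq_nonneg _
  set s := Real.sqrt q with hsdef
  have hs0 : 0 ≤ s := Real.sqrt_nonneg q
  have hs2 : s^2 = q := Real.sq_sqrt hq0
  have hcard : (Finset.univ : Finset (Fin n)).card = n := by simp
  have hq2 : q = S2 - 2*c*S1 + N*c^2 := by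
    calc q = ∑ i, ((x i)^2 - 2*c*x i + c^2) := Finset.sum_congr rfl fun i _ => by ring
    _ = S2 - 2*c*(∑ i, x i) + N*c^2 := by
        rw [Finset.sum_add_distrib, Finset.sum_sub_distrib, ← Finset.mul_sum,
          Finset.sum_const, hcard, nsmul_eq_mul]
  have hS2 : S2 = N*c^2 + s^2 := by
    rw [hs2]
    rw [hS1] at hq2
    linear_combination -hq2
  have hcube : ∑ i, (x i - c)^3 = S3 - 3*c*S2 + 3*c^2*S1 - N*c^3 := by
    calc ∑ i, (x i - c)^3
        = ∑ i, ((x i)^3 - 3*c*(x i)^2 + 3*c^2*x i - c^3) :=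
          Finset.sum_congr rfl fun i _ => by ring
    _ = S3 - 3*c*(∑ i, (x i)^2) + 3*c^2*(∑ i, x i) - N*c^3 := by
        rw [Finset.sum_sub_distrib, Finset.sum_add_distrib, Finset.sum_sub_distrib,
          ← Finset.mul_sum, ← Finset.mul_sum, Finset.sum_const, hcard, nsmul_eq_mul]
  have hsum3 : ∑ i, (x i - c)^3 ≤ s^3 := by
    have hy : ∀ i : Fin n, (x i - c)^3 ≤ (x i - c)^2 * s := by
      intro i
      have h1 : (x i - c)^2 ≤ q := Finset.single_le_sum
        (fun j (_ : j ∈ Finset.univ) => sq_nonneg (x j - c)) (Finset.mem_univ i)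
      have h2 : x i - c ≤ s := by
        have h3 := Real.sqrt_le_sqrt h1
        rw [Real.sqrt_sq_eq_abs] at h3
        calc x i - c ≤ |x i - c| := le_abs_self _
        _ ≤ s := h3
      nlinarith [sq_nonneg (x i - c)]
    calc ∑ i, (x i - c)^3 ≤ ∑ i, (x i - c)^2 * s := Finset.sum_le_sum fun i _ => hy i
    _ = q * s := by rw [← Finset.sum_mul]
    _ = s^3 := by rw [← hs2]; ring
  rw [hcube] at hsum3
  have hS3 : S3 ≤ N*c^3 + 3*c*s^2 + s^3 := by
    rw [hS1, hS2] at hsum3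
    nlinarith [hsum3]
  have e1 : hsym n 1 x = N * c := by rw [hsym_one]; exact hS1
  have e2 : hsym n 2 x = (N*(N+1)*c^2 + s^2)/2 := by
    have h := hsym_two n x
    rw [← hS1def, ← hS2def, hS1, hS2] at h
    linear_combination h / 2
  have e3 : 6 * hsym n 3 x ≤ N*(N+1)*(N+2)*c^3 + 3*(N+2)*c*s^2 + 2*s^3 := by
    have h := hsym_three n x
    rw [← hS1def, ← hS2def, ← hS3def, hS1, hS2] at h
    nlinarith [hS3, h]
  have eC2 : (((n+1).choose 2 : ℕ):ℝ) = N*(N+1)/2 := by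
    have h := choose_two_cast n
    push_cast at h
    linarith
  have eC3 : (((n+2).choose 3 : ℕ):ℝ) = N*(N+1)*(N+2)/6 := by
    have h := choose_three_cast n
    push_cast at h
    linarith
  rw [e1, e2, eC2, eC3]
  have hconst : (0:ℝ) ≤ (N*(N+1)/2)^4 * (N*c)^5 / 6 := by
    have : (0:ℝ) ≤ (N*c)^5 := pow_nonneg (mul_nonneg hN0 hc) 5
    positivity
  have hkey := key_ineq N c s hN hc hs0
  calc (N*(N+1)/2)^4 * (hsym n 3 x * (N*c)^5)
      = ((N*(N+1)/2)^4 * (N*c)^5 / 6) * (6 * hsym n 3 x) := by ring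
    _ ≤ ((N*(N+1)/2)^4 * (N*c)^5 / 6)
          * (N*(N+1)*(N+2)*c^3 + 3*(N+2)*c*s^2 + 2*s^3) :=
        mul_le_mul_of_nonneg_left e3 hconst
    _ = (N*(N+1)*N^5/96)
          * ((N*(N+1))^3*c^5*(N*(N+1)*(N+2)*c^3 + 3*(N+2)*c*s^2 + 2*s^3)) := by ring
    _ ≤ (N*(N+1)*N^5/96) * ((N+2)*(N*(N+1)*c^2+s^2)^4) :=
        mul_le_mul_of_nonneg_left hkey (by positivity)
    _ = N*(N+1)*(N+2)/6 * N^5 * ((N*(N+1)*c^2+s^2)/2)^4 := by ring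

lemma main_aux (n : ℕ) (hn : 1 ≤ n) (x : Fin n → ℝ) (hx : ∀ i, 0 ≤ x i) :
    ∀ m, 4 ≤ m →
      (((n+1).choose 2 : ℕ):ℝ)^m * (hsym n 3 x * (hsym n 1 x)^(2*m-3))
        ≤ (((n+2).choose 3 : ℕ):ℝ) * (n:ℝ)^(2*m-3) * (hsym n 2 x)^m := by
  intro m hm
  induction m, hm using Nat.le_induction with
  | base => simpa using base4 n hn x hx
  | succ m hm ih =>
    have he : 2*(m+1)-3 = (2*m-3)+2 := by omega
    rw [he]
    have hC2 : (0:ℝ) ≤ (((n+1).choose 2 : ℕ):ℝ) := by positivity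
    have step := step_ineq n hn x hx
    calc (((n+1).choose 2 : ℕ):ℝ)^(m+1)
          * (hsym n 3 x * (hsym n 1 x)^((2*m-3)+2))
        = ((((n+1).choose 2 : ℕ):ℝ)^m * (hsym n 3 x * (hsym n 1 x)^(2*m-3)))
          * ((((n+1).choose 2 : ℕ):ℝ) * (hsym n 1 x)^2) := by ring
      _ ≤ ((((n+2).choose 3 : ℕ):ℝ) * (n:ℝ)^(2*m-3) * (hsym n 2 x)^m)
          * ((n:ℝ)^2 * hsym n 2 x) := by
          apply mul_le_mul ih step (by positivity)
          have h2 := hsym_nonneg n 2 x hx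
          positivity
      _ = (((n+2).choose 3 : ℕ):ℝ) * (n:ℝ)^((2*m-3)+2) * (hsym n 2 x)^(m+1) := by ring


/-- For every `m ≥ 4` and `n ≥ 1`, `H_{n,(2^m)} ≥ H_{n,(3,1^{2m−3})}` on `[0,∞)^n`:
explicitly, `h_{n,2}^m / C(n+1,2)^m ≥ h_{n,3}·h_{n,1}^{2m−3} / (C(n+2,3)·n^{2m−3})`. -/
theorem H_two_pow_m_ge (m n : ℕ) (hm : 4 ≤ m) (hn : 1 ≤ n)
    (x : Fin n → ℝ) (hx : ∀ i, 0 ≤ x i) :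
    hsym n 3 x * (hsym n 1 x) ^ (2 * m - 3) /
        (((n + 2).choose 3 : ℝ) * (n : ℝ) ^ (2 * m - 3)) ≤
      (hsym n 2 x) ^ m / (((n + 1).choose 2 : ℝ)) ^ m := by

  have hC3 : (0:ℝ) < ((n + 2).choose 3 : ℝ) * (n : ℝ) ^ (2 * m - 3) := by
    have h1 : 0 < (n+2).choose 3 := Nat.choose_pos (by omega)
    have h2 : (0:ℝ) < (n:ℝ) := by exact_mod_cast hn
    have : (0:ℝ) < ((n+2).choose 3 : ℝ) := by exact_mod_cast h1
    positivity
  have hC2 : (0:ℝ) < (((n + 1).choose 2 : ℕ):ℝ)^m := by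
    have h1 : 0 < (n+1).choose 2 := Nat.choose_pos (by omega)
    have : (0:ℝ) < ((n+1).choose 2 : ℝ) := by exact_mod_cast h1
    positivity
  rw [div_le_div_iff₀ hC3 hC2]
  have aux := main_aux n hn x hx m hm
  calc hsym n 3 x * (hsym n 1 x)^(2*m-3) * (((n+1).choose 2 : ℝ))^m
      = (((n+1).choose 2 : ℕ):ℝ)^m * (hsym n 3 x * (hsym n 1 x)^(2*m-3)) := by
        push_cast; ring
    _ ≤ (((n+2).choose 3 : ℕ):ℝ) * (n:ℝ)^(2*m-3) * (hsym n 2 x)^m := aux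
    _ = (hsym n 2 x)^m * (((n+2).choose 3 : ℝ) * (n:ℝ)^(2*m-3)) := by
        push_cast; ring
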